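/- Contiguous relation IV: let q ∈ (0,1), n ≥ 0 an integer, and a, b real numbers with a q^j ≠ 1 for j = 1, …, n+1. Then the polynomial identity b q^{n+1}(1 − a q^{n+1}) · p_{n+1}(x; a, b) = (1 − a b q^{2n+2})(1 − q b x) · p_n(x; a, qb) − (1 − b q^{n+1}) · p_n(x; a, b) holds for all x. -/

import Mathlib

/-- The q-Pochhammer symbol `(a;q)_k = ∏_{j=0}^{k-1} (1 - a q^j)`. -/
noncomputable def qPoch (q a : ℝ) (k : ℕ) : ℝ :=
  ∏ j ∈ Finset.range k, (1 - a * q ^ j)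

/-- The little q-Jacobi polynomial
`p_n(x; a, b) = ∑_{k=0}^{n} [(q^{−n};q)_k (a b q^{n+1};q)_k / ((a q;q)_k (q;q)_k)] (q x)^k`. -/
noncomputable def littleQJacobi (q a b : ℝ) (n : ℕ) : Polynomial ℝ :=
  ∑ k ∈ Finset.range (n + 1),
    Polynomial.C (qPoch q (q ^ (-(n : ℤ))) k * qPoch q (a * b * q ^ (n + 1)) k /
      (qPoch q (a * q) k * qPoch q q k)) * (Polynomial.C q * Polynomial.X) ^ k

lemma qPoch_succ (q a : ℝ) (k : ℕ) : qPoch q a (k+1) = qPoch q a k * (1 - a * q ^ k) :=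
  Finset.prod_range_succ _ _

lemma qPoch_succ' (q a : ℝ) (k : ℕ) : qPoch q a (k+1) = (1 - a) * qPoch q (a*q) k := by
  unfold qPoch
  rw [Finset.prod_range_succ', pow_zero, mul_one, mul_comm]
  congr 1
  exact Finset.prod_congr rfl fun j _ => by ring_nf

lemma qPoch_negpow_zero (q : ℝ) (hq : q ≠ 0) (n : ℕ) :
    qPoch q (q ^ (-(n:ℤ))) (n+1) = 0 := by
  apply Finset.prod_eq_zero (Finset.mem_range.mpr (Nat.lt_succ_self n))
  have h : q ^ (-(n:ℤ)) * q ^ n = 1 := by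
    rw [zpow_neg, zpow_natCast]
    field_simp
  rw [h, sub_self]

lemma qPoch_q_ne_zero (q : ℝ) (hq0 : 0 < q) (hq1 : q < 1) (k : ℕ) : qPoch q q k ≠ 0 := by
  rw [qPoch]
  apply Finset.prod_ne_zero_iff.mpr
  intro j _
  have : q * q ^ j < 1 := by
    calc q * q ^ j ≤ q * 1 := by
          apply mul_le_mul_of_nonneg_left (pow_le_one₀ hq0.le hq1.le) hq0.le
      _ < 1 := by linarith
  linarith

lemma qPoch_aq_ne_zero (q a : ℝ) (n : ℕ) (ha : ∀ j : ℕ, 1 ≤ j → j ≤ n + 1 → a * q ^ j ≠ 1)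
    (k : ℕ) (hk : k ≤ n + 1) : qPoch q (a*q) k ≠ 0 := by
  rw [qPoch]
  apply Finset.prod_ne_zero_iff.mpr
  intro j hj
  have hj' : j + 1 ≤ n + 1 := le_trans (Finset.mem_range.mp hj) hk
  have h1 := ha (j+1) (Nat.le_add_left 1 j) hj'
  intro hcon
  apply h1
  have : a * q * q ^ j = 1 := by linarith
  rw [← this]; ring

/-- The coefficient of `(q x)^k` in the little q-Jacobi polynomial. -/
noncomputable def coefJ (q a b : ℝ) (n k : ℕ) : ℝ :=
  qPoch q (q ^ (-(n:ℤ))) k * qPoch q (a * b * q ^ (n + 1)) k /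
    (qPoch q (a * q) k * qPoch q q k)

lemma evalJ (q a b x : ℝ) (n : ℕ) :
    (littleQJacobi q a b n).eval x
      = ∑ k ∈ Finset.range (n+1), coefJ q a b n k * (q*x)^k := by
  simp [littleQJacobi, coefJ, Polynomial.eval_finset_sum]

lemma coefJ_zero (q a b : ℝ) (n : ℕ) : coefJ q a b n 0 = 1 := by
  simp [coefJ, qPoch]

lemma coefJ_top (q a b : ℝ) (hq : q ≠ 0) (n : ℕ) : coefJ q a b n (n+1) = 0 := by
  rw [coefJ, qPoch_negpow_zero q hq n, zero_mul, zero_div]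

/-- The key coefficient-wise contiguous identity. -/
lemma perk (q a b : ℝ) (n j : ℕ) (hq0 : 0 < q) (hq1 : q < 1)
    (ha : ∀ i : ℕ, 1 ≤ i → i ≤ n + 1 → a * q ^ i ≠ 1) (hj : j ≤ n) :
    b * q^(n+1) * (1 - a*q^(n+1)) * coefJ q a b (n+1) (j+1)
      = (1 - a*b*q^(2*n+2)) * coefJ q a (q*b) n (j+1)
        - (1 - a*b*q^(2*n+2)) * b * coefJ q a (q*b) n j
        - (1 - b*q^(n+1)) * coefJ q a b n (j+1) := by
  have hq : q ≠ 0 := hq0.ne'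
  have e1 : qPoch q (q ^ (-((n+1:ℕ):ℤ))) (j+1)
      = (1 - (q^(n+1))⁻¹) * qPoch q (q ^ (-(n:ℤ))) j := by
    have harg : (q ^ (-((n+1:ℕ):ℤ)) : ℝ) * q = q ^ (-(n:ℤ)) := by
      rw [← zpow_add_one₀ hq]
      congr 1
      push_cast; ring
    rw [qPoch_succ', harg, zpow_neg, zpow_natCast]
  have e2 : qPoch q (a * b * q ^ ((n+1) + 1)) (j+1)
      = qPoch q (a*b*q^(n+2)) j * (1 - a*b*q^(n+2)*q^j) := qPoch_succ _ _ _
  have e3 : qPoch q (a * (q*b) * q ^ (n + 1)) (j+1)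
      = qPoch q (a*b*q^(n+2)) j * (1 - a*b*q^(n+2)*q^j) := by
    rw [show a * (q*b) * q ^ (n+1) = a*b*q^(n+2) by ring]
    exact qPoch_succ _ _ _
  have e3' : qPoch q (a * (q*b) * q ^ (n + 1)) j = qPoch q (a*b*q^(n+2)) j := by
    rw [show a * (q*b) * q ^ (n+1) = a*b*q^(n+2) by ring]
  have e4 : qPoch q (a * b * q ^ (n + 1)) (j+1)
      = (1 - a*b*q^(n+1)) * qPoch q (a*b*q^(n+2)) j := by
    rw [qPoch_succ', show a * b * q ^ (n+1) * q = a*b*q^(n+2) by ring]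
  have e5 : qPoch q (q ^ (-(n:ℤ))) (j+1)
      = qPoch q (q ^ (-(n:ℤ))) j * (1 - (q^n)⁻¹ * q^j) := by
    rw [qPoch_succ, zpow_neg, zpow_natCast]
  have e6 : qPoch q (a*q) (j+1) = qPoch q (a*q) j * (1 - a*q*q^j) := qPoch_succ _ _ _
  have e7 : qPoch q q (j+1) = qPoch q q j * (1 - q*q^j) := qPoch_succ _ _ _
  have hdA : qPoch q (a*q) j ≠ 0 := qPoch_aq_ne_zero q a n ha j (by omega)
  have hdQ : qPoch q q j ≠ 0 := qPoch_q_ne_zero q hq0 hq1 j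
  have hfA : (1 - a*q*q^j) ≠ 0 := by
    have h1 := ha (j+1) (Nat.le_add_left 1 j) (by omega)
    intro hcon
    apply h1
    have : a * q * q ^ j = 1 := by linarith
    rw [← this]; ring
  have hfQ : (1 - q*q^j) ≠ 0 := by
    have : q * q ^ j < 1 := by
      calc q * q ^ j ≤ q * 1 := by
            apply mul_le_mul_of_nonneg_left (pow_le_one₀ hq0.le hq1.le) hq0.le
        _ < 1 := by linarith
    linarith
  unfold coefJ
  rw [e1, e2, e3, e3', e4, e5, e6, e7]
  have hqn : q ^ n ≠ 0 := pow_ne_zero _ hq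
  have hqn1 : q ^ (n+1) ≠ 0 := pow_ne_zero _ hq
  generalize hA : (1 - a*q*q^j) = A at *
  generalize hB : (1 - q*q^j) = B at *
  field_simp
  subst hA hB
  ring

/-- contiguous relation IV:
`b q^{n+1}(1 − a q^{n+1}) p_{n+1}(x; a, b)
  = (1 − a b q^{2n+2})(1 − q b x) p_n(x; a, qb) − (1 − b q^{n+1}) p_n(x; a, b)`. -/
theorem littleQJacobi_contiguous_IV (q a b : ℝ) (n : ℕ)
    (hq0 : 0 < q) (hq1 : q < 1)
    (ha : ∀ j : ℕ, 1 ≤ j → j ≤ n + 1 → a * q ^ j ≠ 1) :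
    ∀ x : ℝ,
      b * q ^ (n + 1) * (1 - a * q ^ (n + 1)) * (littleQJacobi q a b (n + 1)).eval x =
        (1 - a * b * q ^ (2 * n + 2)) * (1 - q * b * x) *
            (littleQJacobi q a (q * b) n).eval x -
          (1 - b * q ^ (n + 1)) * (littleQJacobi q a b n).eval x := by
  intro x
  have hq : q ≠ 0 := hq0.ne'
  have hL : b * q ^ (n + 1) * (1 - a * q ^ (n + 1)) * (littleQJacobi q a b (n + 1)).eval x
      = (∑ j ∈ Finset.range (n+1),
          b * q^(n+1) * (1 - a*q^(n+1)) * (coefJ q a b (n+1) (j+1) * (q*x)^(j+1)))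
        + b * q^(n+1) * (1 - a*q^(n+1)) := by
    rw [evalJ, Finset.mul_sum, Finset.sum_range_succ']
    simp [coefJ_zero]
  have hR3 : (1 - b * q ^ (n + 1)) * (littleQJacobi q a b n).eval x
      = (∑ j ∈ Finset.range (n+1),
          (1 - b*q^(n+1)) * (coefJ q a b n (j+1) * (q*x)^(j+1)))
        + (1 - b*q^(n+1)) := by
    rw [evalJ, Finset.mul_sum]
    have hext : ∑ k ∈ Finset.range (n+1), (1 - b*q^(n+1)) * (coefJ q a b n k * (q*x)^k)
        = ∑ k ∈ Finset.range (n+2), (1 - b*q^(n+1)) * (coefJ q a b n k * (q*x)^k) := by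
      symm
      rw [Finset.sum_range_succ, coefJ_top q a b hq n]
      simp
    rw [hext, Finset.sum_range_succ']
    simp [coefJ_zero]
  have hR1 : (1 - a * b * q ^ (2 * n + 2)) * (1 - q * b * x) *
        (littleQJacobi q a (q * b) n).eval x
      = ((∑ j ∈ Finset.range (n+1),
            (1 - a*b*q^(2*n+2)) * (coefJ q a (q*b) n (j+1) * (q*x)^(j+1)))
          + (1 - a*b*q^(2*n+2)))
        - (∑ j ∈ Finset.range (n+1),
            (1 - a*b*q^(2*n+2)) * b * (coefJ q a (q*b) n j * (q*x)^(j+1))) := by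
    rw [evalJ, Finset.mul_sum]
    have step : ∀ k ∈ Finset.range (n+1),
        (1 - a*b*q^(2*n+2)) * (1 - q*b*x) * (coefJ q a (q*b) n k * (q*x)^k)
          = (1 - a*b*q^(2*n+2)) * (coefJ q a (q*b) n k * (q*x)^k)
            - (1 - a*b*q^(2*n+2)) * b * (coefJ q a (q*b) n k * (q*x)^(k+1)) :=
      fun k _ => by ring
    rw [Finset.sum_congr rfl step, Finset.sum_sub_distrib]
    congr 1
    have hext : ∑ k ∈ Finset.range (n+1),
          (1 - a*b*q^(2*n+2)) * (coefJ q a (q*b) n k * (q*x)^k)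
        = ∑ k ∈ Finset.range (n+2),
          (1 - a*b*q^(2*n+2)) * (coefJ q a (q*b) n k * (q*x)^k) := by
      symm
      rw [Finset.sum_range_succ, coefJ_top q a (q*b) hq n]
      simp
    rw [hext, Finset.sum_range_succ']
    simp [coefJ_zero]
  rw [hL, hR1, hR3]
  have hper : ∀ j ∈ Finset.range (n+1),
      b * q^(n+1) * (1 - a*q^(n+1)) * (coefJ q a b (n+1) (j+1) * (q*x)^(j+1))
        = (1 - a*b*q^(2*n+2)) * (coefJ q a (q*b) n (j+1) * (q*x)^(j+1))
          - (1 - a*b*q^(2*n+2)) * b * (coefJ q a (q*b) n j * (q*x)^(j+1))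
          - (1 - b*q^(n+1)) * (coefJ q a b n (j+1) * (q*x)^(j+1)) := by
    intro j hj
    have hj' : j ≤ n := by
      have := Finset.mem_range.mp hj; omega
    linear_combination (q*x)^(j+1) * perk q a b n j hq0 hq1 ha hj'
  rw [Finset.sum_congr rfl hper, Finset.sum_sub_distrib, Finset.sum_sub_distrib]
  ring
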